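/- Let ϕ(t) = t·arcsinh(t) − √(t²+1) + 1 for t ∈ ℝ and φ(β) = ∑ᵢ ϕ(βᵢ) on ℝᵈ. Then for every β ≠ 0, lim_{η→0⁺} η · ϕ⁻¹(φ(β/η)) = ∑ᵢ |βᵢ| (the ℓ₁ norm of β), where ϕ⁻¹ is the inverse of ϕ on ℝ_{≥0}. -/

import Mathlib

open Filter

noncomputable def ph (t : ℝ) : ℝ := t * Real.arsinh t - Real.sqrt (t^2+1) + 1

lemma ph_deriv (t : ℝ) : HasDerivAt ph (Real.arsinh t) t := by
  have h1 : HasDerivAt (fun x : ℝ => x * Real.arsinh x)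
      (1 * Real.arsinh t + t * (Real.sqrt (1 + t^2))⁻¹) t :=
    (hasDerivAt_id t).mul (Real.hasDerivAt_arsinh t)
  have h2 : HasDerivAt (fun x : ℝ => Real.sqrt (x^2+1))
      ((2*t) / (2 * Real.sqrt (t^2+1))) t := by
    have : HasDerivAt (fun x : ℝ => x^2+1) (2*t) t := by
      simpa using ((hasDerivAt_pow 2 t).add_const 1)
    exact this.sqrt (by positivity)
  have hs : Real.sqrt (t^2+1) > 0 := Real.sqrt_pos.2 (by positivity)
  have := (h1.sub h2).add_const 1
  refine HasDerivAt.congr_deriv (f := ph) this ?_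
  rw [show Real.sqrt (t^2+1) = Real.sqrt (1+t^2) by rw [add_comm]]
  field_simp
  ring

lemma ph_gap {s t : ℝ} (hst : s ≤ t) : ph s + (t - s) * Real.arsinh s ≤ ph t := by
  set g : ℝ → ℝ := fun x => ph x - x * Real.arsinh s with hg
  have hd : ∀ x, HasDerivAt g (Real.arsinh x - Real.arsinh s) x := fun x =>
    (ph_deriv x).sub ((hasDerivAt_id x).mul_const _ |>.congr_deriv (by ring))
  have hmono : MonotoneOn g (Set.Ici s) := by
    apply monotoneOn_of_deriv_nonneg (convex_Ici s)
    · exact fun x _ => (hd x).differentiableAt.continuousAt.continuousWithinAt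
    · exact fun x _ => (hd x).differentiableAt.differentiableWithinAt
    · intro x hx
      rw [(hd x).deriv]
      rw [interior_Ici] at hx
      have := Real.arsinh_le_arsinh.2 (le_of_lt hx)
      linarith
  have := hmono (Set.mem_Ici.2 le_rfl) (by exact hst) hst
  simp only [hg] at this
  nlinarith [this]

lemma ph_zero : ph 0 = 0 := by simp [ph]

lemma ph_even (t : ℝ) : ph (-t) = ph t := by
  simp only [ph, Real.arsinh_neg, neg_sq, mul_neg, neg_mul, neg_neg]

lemma ph_abs (t : ℝ) : ph t = ph |t| := by
  rcases abs_cases t with ⟨h, _⟩ | ⟨h, _⟩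
  · rw [h]
  · rw [h, ph_even]

lemma ph_nonneg (t : ℝ) : 0 ≤ ph t := by
  rw [ph_abs]
  have := ph_gap (abs_nonneg t)
  simp [ph_zero, Real.arsinh_zero] at this
  linarith

lemma ph_mono {s t : ℝ} (hs : 0 ≤ s) (hst : s ≤ t) : ph s ≤ ph t := by
  have := ph_gap hst
  have h2 : 0 ≤ Real.arsinh s := Real.arsinh_nonneg_iff.2 hs
  nlinarith

lemma ph_le {t : ℝ} : ph t ≤ t * Real.arsinh t := by
  have : (1:ℝ) ≤ Real.sqrt (t^2+1) := by
    nlinarith [Real.sq_sqrt (show (0:ℝ) ≤ t^2+1 by positivity), Real.sqrt_nonneg (t^2+1)]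
  simp only [ph]; linarith

lemma ph_ge {t : ℝ} (ht : 0 ≤ t) : t * Real.arsinh t - t ≤ ph t := by
  have : Real.sqrt (t^2+1) ≤ t + 1 := by
    rw [show t + 1 = Real.sqrt ((t+1)^2) by rw [Real.sqrt_sq (by linarith)]]
    exact Real.sqrt_le_sqrt (by nlinarith)
  simp only [ph]; linarith

lemma arsinh_ge_log {x : ℝ} (hx : 0 < x) : Real.log x ≤ Real.arsinh x := by
  rw [Real.arsinh]
  apply Real.log_le_log hx
  nlinarith [Real.sqrt_nonneg (1 + x^2)]

lemma arsinh_le_log {x : ℝ} (hx : 1 ≤ x) : Real.arsinh x ≤ Real.log (3*x) := by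
  rw [Real.arsinh]
  apply Real.log_le_log (by positivity)
  have : Real.sqrt (1 + x^2) ≤ x + 1 := by
    rw [show x + 1 = Real.sqrt ((x+1)^2) by rw [Real.sqrt_sq (by linarith)]]
    exact Real.sqrt_le_sqrt (by nlinarith)
  linarith

lemma ph_term_lb {c A : ℝ} (hc : 0 < c) (hA : 1 ≤ A) :
    c * A * Real.arsinh A - (c * (1 + Real.log 3 - Real.log c)) * A ≤ ph (c * A) := by
  have hA0 : 0 < A := lt_of_lt_of_le one_pos hA
  have h1 : c * A * Real.arsinh (c * A) - c * A ≤ ph (c * A) := ph_ge (by positivity)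
  have h2 : Real.log c + Real.log A ≤ Real.arsinh (c * A) := by
    have := arsinh_ge_log (show 0 < c * A by positivity)
    rwa [Real.log_mul (ne_of_gt hc) (ne_of_gt hA0)] at this
  have h3 : Real.arsinh A ≤ Real.log 3 + Real.log A := by
    have := arsinh_le_log hA
    rwa [Real.log_mul (by norm_num) (ne_of_gt hA0)] at this
  have h4 : Real.arsinh A + Real.log c - Real.log 3 ≤ Real.arsinh (c * A) := by linarith
  nlinarith [mul_le_mul_of_nonneg_left h4 (show (0:ℝ) ≤ c * A by positivity)]

set_option maxHeartbeats 1000000 in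
theorem stmt7 {d : ℕ} (ϕinv : ℝ → ℝ)
    (hinv1 : ∀ t : ℝ, 0 ≤ t →
      ϕinv (t * Real.arsinh t - Real.sqrt (t ^ 2 + 1) + 1) = t)
    (hinv2 : ∀ s : ℝ, 0 ≤ s → 0 ≤ ϕinv s ∧
      ϕinv s * Real.arsinh (ϕinv s) - Real.sqrt ((ϕinv s) ^ 2 + 1) + 1 = s)
    (β : Fin d → ℝ) (hβ : β ≠ 0) :
    Tendsto (fun η : ℝ =>
        η * ϕinv (∑ i, (β i / η * Real.arsinh (β i / η) - Real.sqrt ((β i / η) ^ 2 + 1) + 1)))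
      (nhdsWithin 0 (Set.Ioi 0)) (nhds (∑ i, |β i|)) := by
  set L : ℝ := ∑ i, |β i| with hLdef
  have hL : 0 < L := by
    obtain ⟨i, hi⟩ : ∃ i, β i ≠ 0 := by
      by_contra h
      push_neg at h
      exact hβ (funext h)
    exact Finset.sum_pos' (fun j _ => abs_nonneg _) ⟨i, Finset.mem_univ i, abs_pos.2 hi⟩
  set D : ℝ := ∑ i, (if β i = 0 then 0 else
      |β i|/L * (1 + Real.log 3 - Real.log (|β i|/L))) with hDdef
  rw [Metric.tendsto_nhdsWithin_nhds]
  intro ε hε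
  set ε' : ℝ := min (1/2) (ε/(2*L)) with hε'def
  have hε'pos : 0 < ε' := lt_min (by norm_num) (by positivity)
  have hε'le : ε' ≤ 1/2 := min_le_left _ _
  set K : ℝ := max (1/ε') (D/ε') with hKdef
  set M : ℝ := max 1 (Real.sinh K) + 1 with hMdef
  have hM1 : 1 < M := by
    have : (1:ℝ) ≤ max 1 (Real.sinh K) := le_max_left _ _
    linarith
  have hM0 : 0 < M := by linarith
  refine ⟨L / M, by positivity, ?_⟩
  intro η hη hdist
  have hη0 : (0:ℝ) < η := hη
  rw [Real.dist_eq, sub_zero, abs_of_pos hη0] at hdist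
  set A : ℝ := L / η with hAdef
  have hA0 : 0 < A := by positivity
  have hAM : M < A := by
    rw [hAdef, lt_div_iff₀ hη0]
    calc M * η < M * (L / M) := by
          exact mul_lt_mul_of_pos_left hdist hM0
      _ = L := by field_simp
  have hA1 : 1 ≤ A := by
    have : (1:ℝ) ≤ max 1 (Real.sinh K) := le_max_left _ _
    linarith
  have hKA : K < Real.arsinh A := by
    have h1 : Real.sinh K < A := by
      have : Real.sinh K ≤ max 1 (Real.sinh K) := le_max_right _ _
      linarith
    have := Real.arsinh_lt_arsinh.2 h1
    rwa [Real.arsinh_sinh] at this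
  have hK1 : 1/ε' < Real.arsinh A := lt_of_le_of_lt (le_max_left _ _) hKA
  have hKD : D/ε' < Real.arsinh A := lt_of_le_of_lt (le_max_right _ _) hKA
  have harsA0 : 0 < Real.arsinh A := by
    have : (0:ℝ) < 1/ε' := by positivity
    linarith
  -- φ
  set φ : ℝ := ∑ i, ph (β i / η) with hφdef
  have hφraw : (∑ i, (β i / η * Real.arsinh (β i / η) - Real.sqrt ((β i / η) ^ 2 + 1) + 1)) = φ := by
    rw [hφdef]
    exact Finset.sum_congr rfl fun i _ => by simp only [ph]
  have hφ0 : 0 ≤ φ := Finset.sum_nonneg fun i _ => ph_nonneg _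
  have habs : ∀ i : Fin d, ph (β i / η) = ph (|β i| / η) := by
    intro i
    rw [ph_abs (β i / η), abs_div, abs_of_pos hη0]
  -- sum of |β i|/η = A
  have hsumA : ∑ i, |β i| / η = A := by
    rw [hAdef, hLdef, Finset.sum_div]
  -- upper bound: φ ≤ ph A + A
  have hup : φ ≤ ph A + A := by
    have h1 : φ ≤ ∑ i, (|β i| / η) * Real.arsinh A := by
      apply Finset.sum_le_sum
      intro i _
      rw [habs i]
      refine le_trans ph_le ?_
      apply mul_le_mul_of_nonneg_left _ (by positivity)
      apply Real.arsinh_le_arsinh.2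
      rw [← hsumA]
      exact Finset.single_le_sum (f := fun j => |β j| / η) (fun j _ => by positivity) (Finset.mem_univ i)
    have h2 : ∑ i, (|β i| / η) * Real.arsinh A = A * Real.arsinh A := by
      rw [← Finset.sum_mul, hsumA]
    have h3 : A * Real.arsinh A ≤ ph A + A := by
      have := ph_ge (le_of_lt hA0)
      linarith
    linarith [h1, h2.le, h2.ge]
  -- lower bound: A * arsinh A - D * A ≤ φ
  have hlow : A * Real.arsinh A - D * A ≤ φ := by
    have h1 : ∀ i : Fin d, (|β i|/L) * A * Real.arsinh A -
        (if β i = 0 then 0 else |β i|/L * (1 + Real.log 3 - Real.log (|β i|/L))) * A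
        ≤ ph (β i / η) := by
      intro i
      rw [habs i]
      by_cases hb : β i = 0
      · simp [hb, ph_zero]
      · rw [if_neg hb]
        have hc : 0 < |β i| / L := by
          apply div_pos (abs_pos.2 hb) hL
        have hca : |β i| / L * A = |β i| / η := by
          rw [hAdef]; field_simp
        have h := ph_term_lb hc hA1
        rw [hca] at h
        rw [hca]
        exact h
    have h2 := Finset.sum_le_sum (s := Finset.univ) (fun i _ => h1 i)
    rw [← hφdef] at h2
    have h3 : ∑ i, ((|β i|/L) * A * Real.arsinh A -
        (if β i = 0 then 0 else |β i|/L * (1 + Real.log 3 - Real.log (|β i|/L))) * A)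
        = A * Real.arsinh A - D * A := by
      rw [Finset.sum_sub_distrib, ← Finset.sum_mul, ← Finset.sum_mul, ← Finset.sum_mul, ← hDdef]
      congr 1
      have : ∑ i, |β i| / L = 1 := by
        rw [← Finset.sum_div, ← hLdef, div_self (ne_of_gt hL)]
      rw [this, one_mul]
    linarith [h3 ▸ h2]
  -- u
  set u : ℝ := ϕinv φ with hudef
  obtain ⟨hu0, huφ⟩ := hinv2 φ hφ0
  have hphu : ph u = φ := by
    simpa [ph] using huφ
  -- u ≤ (1+ε') A
  have hub : u ≤ (1 + ε') * A := by
    by_contra h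
    push_neg at h
    have hAu : A ≤ u := by nlinarith
    have := ph_gap hAu
    rw [hphu] at this
    have hgap : (u - A) * Real.arsinh A ≤ A := by
      have harsa : Real.arsinh A ≤ Real.arsinh A := le_refl _
      linarith [this, hup]
    have h5 : ε' * A < u - A := by nlinarith
    have h6 : A < (u - A) * Real.arsinh A := by
      have : 1/ε' * (ε' * A) < Real.arsinh A * (u - A) := by
        apply mul_lt_mul' (le_of_lt hK1) h5 (by positivity) harsA0
      calc A = 1/ε' * (ε' * A) := by field_simp
        _ < Real.arsinh A * (u - A) := this
        _ = (u - A) * Real.arsinh A := by ring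
    linarith
  -- (1-ε') A ≤ u
  have hlb : (1 - ε') * A ≤ u := by
    by_contra h
    push_neg at h
    have h1 : ph u ≤ ph ((1 - ε') * A) := ph_mono hu0 (le_of_lt h)
    have h2 : ph ((1 - ε') * A) ≤ (1 - ε') * A * Real.arsinh ((1-ε')*A) := ph_le
    have h3 : Real.arsinh ((1-ε')*A) ≤ Real.arsinh A := by
      apply Real.arsinh_le_arsinh.2
      nlinarith
    have h4 : (1 - ε') * A * Real.arsinh ((1-ε')*A) ≤ (1 - ε') * A * Real.arsinh A := by
      apply mul_le_mul_of_nonneg_left h3 (by nlinarith)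
    have h5 : A * Real.arsinh A - D * A ≤ (1 - ε') * A * Real.arsinh A := by
      rw [hphu] at h1
      linarith
    have h6 : ε' * Real.arsinh A ≤ D := by
      nlinarith
    have h7 : D < ε' * Real.arsinh A := by
      have := (div_lt_iff₀ hε'pos).1 hKD
      linarith [this]
    linarith
  -- conclude
  have hηA : η * A = L := by rw [hAdef]; field_simp
  have key : |η * u - L| ≤ ε' * L := by
    have hl2 : (1 - ε') * L ≤ η * u := by
      calc (1 - ε') * L = η * ((1 - ε') * A) := by rw [← hηA]; ring
        _ ≤ η * u := by apply mul_le_mul_of_nonneg_left hlb (le_of_lt hη0)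
    have hu2 : η * u ≤ (1 + ε') * L := by
      calc η * u ≤ η * ((1 + ε') * A) := by
            apply mul_le_mul_of_nonneg_left hub (le_of_lt hη0)
        _ = (1 + ε') * L := by rw [← hηA]; ring
    rw [abs_le]
    constructor <;> nlinarith
  have : ε' * L ≤ ε / 2 := by
    have : ε' ≤ ε / (2 * L) := min_le_right _ _
    calc ε' * L ≤ ε / (2*L) * L := by apply mul_le_mul_of_nonneg_right this (le_of_lt hL)
      _ = ε / 2 := by field_simp
  rw [Real.dist_eq]
  rw [hφraw]
  calc |η * ϕinv φ - L| = |η * u - L| := by rw [hudef]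
    _ ≤ ε' * L := key
    _ ≤ ε / 2 := this
    _ < ε := by linarith
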